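/- Let X be a finite set, Θ ⊆ ℝ^k open, θ ↦ p_θ a twice continuously differentiable family of strictly positive probability distributions on X, and λ : Θ → (0,∞) twice continuously differentiable. Define the positive measures p̃_θ(x) := λ(θ) p_θ(x) and the generalized KL-divergence I(p̃ ∥ q̃) := ∑_x p̃(x) log(p̃(x)/q̃(x)) − ∑_x p̃(x) + ∑_x q̃(x). Then for all i, j and all θ ∈ Θ, −(∂/∂θ'_j)(∂/∂θ_i) I(p̃_θ ∥ p̃_{θ'}) evaluated at θ' = θ equals λ(θ) [ g^{(e)}_{ij}(θ) + ∂_i log λ(θ) · ∂_j log λ(θ) ], where g^{(e)}_{ij}(θ) := E_{p_θ}[∂_i log p_θ(X) ∂_j log p_θ(X)] is the Fisher information matrix. -/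

import Mathlib

open scoped BigOperators Topology Matrix
open Real MeasureTheory

noncomputable section

/-- Expectation of `A` under the weight/distribution `p` on a finite set. -/
def expct {X : Type*} [Fintype X] (p A : X → ℝ) : ℝ := ∑ x, p x * A x

/-- Covariance of `A` and `B` under `p`. -/
def covf {X : Type*} [Fintype X] (p A B : X → ℝ) : ℝ :=
  (∑ x, p x * A x * B x) - (∑ x, p x * A x) * (∑ x, p x * B x)

/-- Variance of `A` under `p`: `E_p[(A - E_p A)^2]`. -/
def varE {X : Type*} [Fintype X] (p A : X → ℝ) : ℝ :=
  ∑ x, p x * (A x - expct p A) ^ 2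

/-- The α-escort distribution of `p`. -/
def escort {X : Type*} [Fintype X] (α : ℝ) (p : X → ℝ) : X → ℝ :=
  fun x => p x ^ α / ∑ y, p y ^ α

/-- Partial derivative in the `i`-th coordinate direction. -/
def pderiv {m : ℕ} (i : Fin m) (f : (Fin m → ℝ) → ℝ) (θ : Fin m → ℝ) : ℝ :=
  fderiv ℝ f θ (Pi.single i 1)

/-- Covariance matrix of a vector-valued map `A` under `p`. -/
def covMatrix {X : Type*} [Fintype X] {m : ℕ} (p : X → ℝ) (A : X → Fin m → ℝ) :
    Matrix (Fin m) (Fin m) ℝ :=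
  Matrix.of fun i j => covf p (fun x => A x i) (fun x => A x j)

/-- The α-information matrix `G^{(α)}(θ)`. -/
def Galpha {X : Type*} [Fintype X] {m : ℕ} (α : ℝ) (p : (Fin m → ℝ) → X → ℝ)
    (θ : Fin m → ℝ) : Matrix (Fin m) (Fin m) ℝ :=
  Matrix.of fun i j =>
    covf (escort α (p θ)) (fun x => pderiv i (fun t => Real.log (p t x)) θ)
      (fun x => pderiv j (fun t => Real.log (p t x)) θ)

/-- The I_α-divergence (relative α-entropy). -/
def Ialpha {X : Type*} [Fintype X] (α : ℝ) (p q : X → ℝ) : ℝ :=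
  (1 / (1 - α)) * Real.log (∑ x, p x * q x ^ (α - 1))
    + (1 / α) * Real.log (∑ x, q x ^ α)
    - (1 / (α * (1 - α))) * Real.log (∑ x, p x ^ α)

/-- Generalized KL-divergence between positive measures on a finite set. -/
def genKL {X : Type*} [Fintype X] (pt qt : X → ℝ) : ℝ :=
  ∑ x, pt x * Real.log (pt x / qt x) - ∑ x, pt x + ∑ x, qt x

/-- The Fisher information matrix `G^{(e)}(θ)`. -/
def GeMat {X : Type*} [Fintype X] {k : ℕ} (p : (Fin k → ℝ) → X → ℝ) (θ : Fin k → ℝ) :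
    Matrix (Fin k) (Fin k) ℝ :=
  Matrix.of fun i j =>
    ∑ x, p θ x * pderiv i (fun t => Real.log (p t x)) θ * pderiv j (fun t => Real.log (p t x)) θ

/-- The prior matrix `J^λ(θ)` with entries `∂_i log λ · ∂_j log λ`. -/
def Jmat {k : ℕ} (lam : (Fin k → ℝ) → ℝ) (θ : Fin k → ℝ) : Matrix (Fin k) (Fin k) ℝ :=
  Matrix.of fun i j =>
    pderiv i (fun t => Real.log (lam t)) θ * pderiv j (fun t => Real.log (lam t)) θ

/-- The generalized Fisher matrix `G^{(f,F)}(θ)` of the escort model. -/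
def GFF {X : Type*} [Fintype X] {k : ℕ} (F : ℝ → ℝ) (p : (Fin k → ℝ) → X → ℝ)
    (θ : Fin k → ℝ) : Matrix (Fin k) (Fin k) ℝ :=
  Matrix.of fun i j =>
    ∑ x, F (p θ x) * pderiv i (fun t => Real.log (F (p t x))) θ
      * pderiv j (fun t => Real.log (F (p t x))) θ

/-- The generalized f-divergence `D_f^{(F)}(p,q)`. -/
def genDiv {X : Type*} [Fintype X] (f F : ℝ → ℝ) (p q : X → ℝ) : ℝ :=
  (1 / deriv (deriv f) 1) * ∑ x, F (q x) * f (F (p x) / F (q x))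

/-- The Bayesian I_α-divergence between `λ·p` and `μ·q`. -/
def IalphaB {X : Type*} [Fintype X] (α lam mu : ℝ) (p q : X → ℝ) : ℝ :=
  lam * Ialpha α p q + lam * Real.log (lam / mu) - lam + mu

/-- The open-simplex parametrization of distributions on a set with `d+1` points. -/
def simplexFam (d : ℕ) (θ : Fin d → ℝ) : Fin (d + 1) → ℝ :=
  fun x => if h : (x : ℕ) < d then θ ⟨x, h⟩ else 1 - ∑ i, θ i

/-- the Eguchi metric of the generalized KL-divergence between the
unnormalized measures `p̃_θ = λ(θ)p_θ` is `λ(θ)[G^{(e)}(θ) + J^λ(θ)]`. -/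
theorem eguchi_metric_bayesian_KL {X : Type*} [Fintype X] {k : ℕ}
    (Θ : Set (Fin k → ℝ)) (hΘ : IsOpen Θ)
    (p : (Fin k → ℝ) → X → ℝ)
    (hsmooth : ∀ x, ContDiffOn ℝ 2 (fun θ => p θ x) Θ)
    (hpos : ∀ θ ∈ Θ, ∀ x, 0 < p θ x)
    (hsum : ∀ θ ∈ Θ, ∑ x, p θ x = 1)
    (lam : (Fin k → ℝ) → ℝ) (hlams : ContDiffOn ℝ 2 lam Θ)
    (hlampos : ∀ θ ∈ Θ, 0 < lam θ) :
    ∀ θ ∈ Θ, ∀ i j : Fin k,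
      -(pderiv j (fun θ' => pderiv i (fun t =>
            genKL (fun x => lam t * p t x) (fun x => lam θ' * p θ' x)) θ) θ)
        = lam θ * (GeMat p θ i j
            + pderiv i (fun t => Real.log (lam t)) θ
              * pderiv j (fun t => Real.log (lam t)) θ) := by
  intro θ hθ i j
  classical
  have hmem : Θ ∈ 𝓝 θ := hΘ.mem_nhds hθ
  have hdp : ∀ x, ∀ s ∈ Θ, DifferentiableAt ℝ (fun t => p t x) s := fun x s hs =>
    ((hsmooth x).contDiffAt (hΘ.mem_nhds hs)).differentiableAt (by norm_num)
  have hdlam : ∀ s ∈ Θ, DifferentiableAt ℝ lam s := fun s hs =>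
    (hlams.contDiffAt (hΘ.mem_nhds hs)).differentiableAt (by norm_num)
  have hdq : ∀ x, ∀ s ∈ Θ, DifferentiableAt ℝ (fun t => lam t * p t x) s := fun x s hs =>
    (hdlam s hs).mul (hdp x s hs)
  have hqpos : ∀ s ∈ Θ, ∀ x, 0 < lam s * p s x := fun s hs x =>
    mul_pos (hlampos s hs) (hpos s hs x)
  set Dq : X → (Fin k → ℝ) →L[ℝ] ℝ := fun x => fderiv ℝ (fun t => lam t * p t x) θ with hDqdef
  set dp : X → (Fin k → ℝ) →L[ℝ] ℝ := fun x => fderiv ℝ (fun t => p t x) θ with hdpdef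
  set dl : (Fin k → ℝ) →L[ℝ] ℝ := fderiv ℝ lam θ with hdldef
  have hq : ∀ x, HasFDerivAt (fun t => lam t * p t x) (Dq x) θ := fun x =>
    (hdq x θ hθ).hasFDerivAt
  -- Step A : inner derivative
  have hA : ∀ θ' ∈ Θ,
      pderiv i (fun t => genKL (fun x => lam t * p t x) (fun x => lam θ' * p θ' x)) θ
        = ∑ x, (Dq x (Pi.single i 1)) *
            (Real.log (lam θ * p θ x) - Real.log (lam θ' * p θ' x)) := by
    intro θ' hθ'
    have hH : HasFDerivAt (fun t => (∑ x, (lam t * p t x) *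
          (Real.log (lam t * p t x) - Real.log (lam θ' * p θ' x)))
          - (∑ x, lam t * p t x) + (∑ x, lam θ' * p θ' x))
        ((∑ x, ((lam θ * p θ x) • ((lam θ * p θ x)⁻¹ • Dq x)
            + (Real.log (lam θ * p θ x) - Real.log (lam θ' * p θ' x)) • Dq x))
          - ∑ x, Dq x) θ := by
      apply HasFDerivAt.add_const
      apply HasFDerivAt.sub
      · exact HasFDerivAt.fun_sum fun x _ =>
          (hq x).mul (((hq x).log (ne_of_gt (hqpos θ hθ x))).sub_const _)
      · exact HasFDerivAt.fun_sum fun x _ => hq x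
    have hev : (fun t => genKL (fun x => lam t * p t x) (fun x => lam θ' * p θ' x))
        =ᶠ[𝓝 θ] (fun t => (∑ x, (lam t * p t x) *
            (Real.log (lam t * p t x) - Real.log (lam θ' * p θ' x)))
          - (∑ x, lam t * p t x) + (∑ x, lam θ' * p θ' x)) := by
      filter_upwards [hmem] with t ht
      unfold genKL
      congr 1
      congr 1
      exact Finset.sum_congr rfl fun x _ => by
        rw [Real.log_div (ne_of_gt (hqpos t ht x)) (ne_of_gt (hqpos θ' hθ' x))]
    unfold pderiv
    rw [hev.fderiv_eq, hH.fderiv]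
    simp only [ContinuousLinearMap.sub_apply, ContinuousLinearMap.sum_apply,
      ContinuousLinearMap.add_apply, ContinuousLinearMap.smul_apply, smul_eq_mul]
    rw [Finset.sum_add_distrib]
    have h1 : ∑ x, (lam θ * p θ x) * ((lam θ * p θ x)⁻¹ * Dq x (Pi.single i 1))
        = ∑ x, Dq x (Pi.single i 1) := Finset.sum_congr rfl fun x _ =>
      mul_inv_cancel_left₀ (ne_of_gt (hqpos θ hθ x)) _
    rw [h1, add_sub_cancel_left]
    exact Finset.sum_congr rfl fun x _ => mul_comm _ _
  -- Step B : outer derivative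
  have hgev : (fun θ' => pderiv i (fun t =>
        genKL (fun x => lam t * p t x) (fun x => lam θ' * p θ' x)) θ)
      =ᶠ[𝓝 θ] (fun θ' => ∑ x, (Dq x (Pi.single i 1)) *
          (Real.log (lam θ * p θ x) - Real.log (lam θ' * p θ' x))) := by
    filter_upwards [hmem] with θ' h using hA θ' h
  have hg : HasFDerivAt (fun θ' => ∑ x, (Dq x (Pi.single i 1)) *
        (Real.log (lam θ * p θ x) - Real.log (lam θ' * p θ' x)))
      (∑ x, (Dq x (Pi.single i 1)) • (-((lam θ * p θ x)⁻¹ • Dq x))) θ :=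
    HasFDerivAt.fun_sum fun x _ =>
      (((hq x).log (ne_of_gt (hqpos θ hθ x))).const_sub _).const_mul _
  have hLHS : pderiv j (fun θ' => pderiv i (fun t =>
        genKL (fun x => lam t * p t x) (fun x => lam θ' * p θ' x)) θ) θ
      = ∑ x, Dq x (Pi.single i 1) *
          (-((lam θ * p θ x)⁻¹ * Dq x (Pi.single j 1))) := by
    show (fderiv ℝ (fun θ' => pderiv i (fun t =>
        genKL (fun x => lam t * p t x) (fun x => lam θ' * p θ' x)) θ) θ) (Pi.single j 1) = _
    rw [hgev.fderiv_eq, hg.fderiv]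
    simp only [ContinuousLinearMap.sum_apply, ContinuousLinearMap.smul_apply,
      ContinuousLinearMap.neg_apply, smul_eq_mul]
  -- product rule for Dq
  have hDqe : ∀ x, Dq x = lam θ • dp x + p θ x • dl := fun x =>
    fderiv_mul (hdlam θ hθ) (hdp x θ hθ)
  -- log derivatives
  have hlogp : ∀ (v : Fin k) (x : X), pderiv v (fun t => Real.log (p t x)) θ
      = (p θ x)⁻¹ * dp x (Pi.single v 1) := fun v x => by
    unfold pderiv
    rw [((hdp x θ hθ).hasFDerivAt.log (ne_of_gt (hpos θ hθ x))).fderiv]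
    simp
    exact Or.inl rfl
  have hloglam : ∀ (v : Fin k), pderiv v (fun t => Real.log (lam t)) θ
      = (lam θ)⁻¹ * dl (Pi.single v 1) := fun v => by
    unfold pderiv
    rw [((hdlam θ hθ).hasFDerivAt.log (ne_of_gt (hlampos θ hθ))).fderiv]
    simp
    exact Or.inl rfl
  -- sum of dp is zero
  have hsum0 : ∑ x, dp x = 0 := by
    have h1 : HasFDerivAt (fun t => ∑ x, p t x) (∑ x, dp x) θ :=
      HasFDerivAt.fun_sum fun x _ => (hdp x θ hθ).hasFDerivAt
    have h2 : (fun t => ∑ x, p t x) =ᶠ[𝓝 θ] fun _ => (1:ℝ) := by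
      filter_upwards [hmem] with t ht using hsum t ht
    have h3 : fderiv ℝ (fun t => ∑ x, p t x) θ = fderiv ℝ (fun _ => (1:ℝ)) θ := h2.fderiv_eq
    have h4 : fderiv ℝ (fun _ : Fin k → ℝ => (1:ℝ)) θ = 0 := fderiv_const_apply 1
    rw [h1.fderiv, h4] at h3
    exact h3
  have hsum0i : ∑ x, dp x (Pi.single i 1) = 0 := by
    have := congrArg (fun (L : (Fin k → ℝ) →L[ℝ] ℝ) => L (Pi.single i 1)) hsum0
    simpa using this
  have hsum0j : ∑ x, dp x (Pi.single j 1) = 0 := by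
    have := congrArg (fun (L : (Fin k → ℝ) →L[ℝ] ℝ) => L (Pi.single j 1)) hsum0
    simpa using this
  -- final algebra
  rw [hLHS]
  have hneg : -(∑ x, Dq x (Pi.single i 1) *
        (-((lam θ * p θ x)⁻¹ * Dq x (Pi.single j 1))))
      = ∑ x, Dq x (Pi.single i 1) * ((lam θ * p θ x)⁻¹ * Dq x (Pi.single j 1)) := by
    simp [mul_neg]
  rw [hneg]
  have key : ∀ x : X, Dq x (Pi.single i 1) * ((lam θ * p θ x)⁻¹ * Dq x (Pi.single j 1))
      = lam θ * (p θ x * ((p θ x)⁻¹ * dp x (Pi.single i 1))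
            * ((p θ x)⁻¹ * dp x (Pi.single j 1)))
        + dl (Pi.single i 1) * dp x (Pi.single j 1)
        + dl (Pi.single j 1) * dp x (Pi.single i 1)
        + (lam θ * (((lam θ)⁻¹ * dl (Pi.single i 1))
            * ((lam θ)⁻¹ * dl (Pi.single j 1)))) * p θ x := by
    intro x
    have h1 : Dq x (Pi.single i 1)
        = lam θ * dp x (Pi.single i 1) + p θ x * dl (Pi.single i 1) := by
      rw [hDqe x]; simp
    have h2 : Dq x (Pi.single j 1)
        = lam θ * dp x (Pi.single j 1) + p θ x * dl (Pi.single j 1) := by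
      rw [hDqe x]; simp
    have hp0 : p θ x ≠ 0 := ne_of_gt (hpos θ hθ x)
    have hl0 : lam θ ≠ 0 := ne_of_gt (hlampos θ hθ)
    rw [h1, h2]
    field_simp
    ring
  rw [Finset.sum_congr rfl fun x _ => key x]
  simp only [GeMat, Matrix.of_apply, hlogp, hloglam]
  rw [Finset.sum_add_distrib, Finset.sum_add_distrib, Finset.sum_add_distrib,
    ← Finset.mul_sum, ← Finset.mul_sum, ← Finset.mul_sum, ← Finset.mul_sum,
    hsum0i, hsum0j, hsum θ hθ]
  ring
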